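/- The d-dimensional Ali-Mikhail-Haq function C(u^1,...,u^d) = (∏_{i=1}^d u^i) / (1 - α ∏_{i=1}^d (1-u^i)) with α ∈ [0,1] satisfies, for every j ∈ {1,...,d} and all (u^1,...,u^d) ∈ (0,1]^d, the inequality C(u^1,...,u^d)/u^j ≥ ∂C(u^1,...,u^d)/∂u^j. -/

import Mathlib

open Finset

/-- the d-dimensional AMH copula with `α ∈ [0,1]` satisfies
`C(u)/u^j ≥ ∂_j C(u)` on `(0,1]^d`. -/
theorem amh_ratio_ge_partial
    (d : ℕ) (α : ℝ) (hα : α ∈ Set.Icc (0:ℝ) 1)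
    (C : (Fin d → ℝ) → ℝ)
    (hC : ∀ u, C u = (∏ i, u i) / (1 - α * ∏ i, (1 - u i)))
    (j : Fin d) (u : Fin d → ℝ) (hu : ∀ i, u i ∈ Set.Ioc (0:ℝ) 1) :
    C u / u j ≥ deriv (fun t => C (Function.update u j t)) (u j) := by
  obtain ⟨hα0, hα1⟩ := hα
  have hs0 : 0 < u j := (hu j).1
  have hs1 : u j ≤ 1 := (hu j).2
  set P := ∏ i ∈ univ.erase j, u i with hPdef
  set Q := ∏ i ∈ univ.erase j, (1 - u i) with hQdef
  have hP0 : 0 ≤ P := Finset.prod_nonneg fun i _ => le_of_lt (hu i).1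
  have hQ0 : 0 ≤ Q := Finset.prod_nonneg fun i _ => by linarith [(hu i).2]
  have hQ1 : Q ≤ 1 := Finset.prod_le_one (fun i _ => by linarith [(hu i).2])
      (fun i _ => by linarith [(hu i).1])
  have hD : 0 < 1 - α * ((1 - u j) * Q) := by
    nlinarith [mul_nonneg (mul_nonneg hα0 (by linarith : (0:ℝ) ≤ 1 - u j)) hQ0,
      mul_nonneg (by linarith : (0:ℝ) ≤ 1 - α) (mul_nonneg (by linarith : (0:ℝ) ≤ 1 - u j) hQ0),
      mul_nonneg hα0 (mul_nonneg (by linarith : (0:ℝ) ≤ 1 - u j) (by linarith : (0:ℝ) ≤ 1 - Q))]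
  have hD' : (1 - α * ((1 - u j) * Q)) ≠ 0 := ne_of_gt hD
  have key : ∀ (v : ℝ) (g : Fin d → ℝ),
      (∏ i, Function.update g j v i) = v * ∏ i ∈ univ.erase j, g i := by
    intro v g
    rw [Finset.prod_update_of_mem (Finset.mem_univ j)]
    congr 1
    rw [Finset.sdiff_singleton_eq_erase]
  have hfun : (fun t => C (Function.update u j t))
      = fun t => (t * P) / (1 - α * ((1 - t) * Q)) := by
    funext t
    rw [hC]
    have h1 : (∏ i, Function.update u j t i) = t * P := key t u
    have h2 : (∏ i, (1 - Function.update u j t i)) = (1 - t) * Q := by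
      have he : (fun i => 1 - Function.update u j t i)
          = Function.update (fun i => 1 - u i) j (1 - t) := by
        funext i
        by_cases h : i = j
        · subst h; simp
        · simp [Function.update_of_ne h]
      calc (∏ i, (1 - Function.update u j t i))
          = ∏ i, Function.update (fun i => 1 - u i) j (1 - t) i := by rw [he]
        _ = (1 - t) * Q := key (1 - t) (fun i => 1 - u i)
    rw [h1, h2]
  have hder : HasDerivAt (fun t => (t * P) / (1 - α * ((1 - t) * Q)))
      ((P * (1 - α * ((1 - u j) * Q)) - (u j * P) * (α * Q))
        / (1 - α * ((1 - u j) * Q)) ^ 2) (u j) := by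
    have h1 : HasDerivAt (fun t : ℝ => t * P) P (u j) := by
      simpa using (hasDerivAt_id (u j)).mul_const P
    have h2 : HasDerivAt (fun t : ℝ => 1 - α * ((1 - t) * Q)) (α * Q) (u j) := by
      have ha : HasDerivAt (fun t : ℝ => (1 : ℝ) - t) (-1) (u j) := by
        simpa using (hasDerivAt_id (u j)).const_sub 1
      have hb := ((ha.mul_const Q).const_mul α).const_sub 1
      rw [show α * Q = -(α * (-1 * Q)) by ring]
      exact hb
    exact h1.div h2 hD'
  rw [hfun, hder.deriv, hC,
    ← Finset.mul_prod_erase _ u (Finset.mem_univ j),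
    ← Finset.mul_prod_erase _ (fun i => 1 - u i) (Finset.mem_univ j)]
  rw [ge_iff_le, div_div, div_le_div_iff₀ (pow_pos hD 2) (by positivity)]
  have hpos : 0 ≤ u j * u j * (α * (P * (Q * (1 - α * ((1 - u j) * Q))))) := by positivity
  nlinarith [hpos]
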